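/- Exact preservation of the ground state by the linearly implicit scheme: for every τ with 0 < τ < 8, the function ψ* := (1 − τ/8)^{−1}·η satisfies ψ*(x) = η(x) + τ·( (1/2)·ψ*''(x) + η(x)²·ψ*(x) ) for every x ∈ ℝ, and ψ*/‖ψ*‖_{L²} = η. In other words, if ψ_n = η then the linearly implicit step followed by L² normalization returns ψ_{n+1} = η. -/

import Mathlib

open MeasureTheory

/-- The ground state `η(x) = (1/2) sech(x/2)`. -/
noncomputable def eta (x : ℝ) : ℝ := (1/2) * (1 / Real.cosh (x/2))

lemma cosh_half_hasDerivAt (x : ℝ) :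
    HasDerivAt (fun y : ℝ => Real.cosh (y/2)) (Real.sinh (x/2) * (1/2)) x :=
  by have h := (Real.hasDerivAt_cosh (x/2)).comp x ((hasDerivAt_id x).div_const 2); exact h

lemma sinh_half_hasDerivAt (x : ℝ) :
    HasDerivAt (fun y : ℝ => Real.sinh (y/2)) (Real.cosh (x/2) * (1/2)) x :=
  by have h := (Real.hasDerivAt_sinh (x/2)).comp x ((hasDerivAt_id x).div_const 2); exact h

lemma cosh_ne (x : ℝ) : Real.cosh (x/2) ≠ 0 := (Real.cosh_pos (x/2)).ne'

/-- First derivative of eta. -/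
noncomputable def etaD (x : ℝ) : ℝ := -(1/4) * Real.sinh (x/2) / Real.cosh (x/2)^2

lemma eta_hasDerivAt (x : ℝ) : HasDerivAt eta (etaD x) x := by
  have h : HasDerivAt (fun y : ℝ => (Real.cosh (y/2))⁻¹)
      (-(Real.sinh (x/2) * (1/2)) / (Real.cosh (x/2))^2) x :=
    (cosh_half_hasDerivAt x).inv (cosh_ne x)
  have h2 := h.const_mul (1/2 : ℝ)
  have : eta = fun y : ℝ => (1/2) * (Real.cosh (y/2))⁻¹ := by
    funext y; simp [eta, one_div]
  rw [this, etaD]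
  refine h2.congr_deriv ?_.symm
  ring

/-- Second derivative of eta. -/
noncomputable def etaDD (x : ℝ) : ℝ :=
  (1/8) * (1 / Real.cosh (x/2)) - (1/4) * (1 / Real.cosh (x/2))^3

lemma etaD_hasDerivAt (x : ℝ) : HasDerivAt etaD (etaDD x) x := by
  have h : HasDerivAt (fun y : ℝ => Real.sinh (y/2) / Real.cosh (y/2)^2)
      (((Real.cosh (x/2) * (1/2)) * Real.cosh (x/2)^2 -
        Real.sinh (x/2) * (((2:ℕ):ℝ) * Real.cosh (x/2)^(2-1) * (Real.sinh (x/2) * (1/2)))) /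
        (Real.cosh (x/2)^2)^2) x :=
    (sinh_half_hasDerivAt x).div
      ((cosh_half_hasDerivAt x).pow 2) (pow_ne_zero 2 (cosh_ne x))
  have h2 := h.const_mul (-(1/4) : ℝ)
  have he : etaD = fun y : ℝ => -(1/4) * (Real.sinh (y/2) / Real.cosh (y/2)^2) := by
    funext y; simp only [etaD]; ring
  rw [he, etaDD]
  refine h2.congr_deriv ?_.symm
  have hs : Real.sinh (x/2)^2 = Real.cosh (x/2)^2 - 1 := by
    have := Real.cosh_sq_sub_sinh_sq (x/2); linarith
  have hc := cosh_ne x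
  field_simp
  linear_combination ((16:ℝ) * Real.cosh (x/2)) * hs

lemma tanh_half_hasDerivAt (x : ℝ) :
    HasDerivAt (fun y : ℝ => (1/2) * (Real.sinh (y/2) / Real.cosh (y/2))) (eta x ^ 2) x := by
  have h : HasDerivAt (fun y : ℝ => Real.sinh (y/2) / Real.cosh (y/2))
      ((Real.cosh (x/2) * (1/2) * Real.cosh (x/2) -
        Real.sinh (x/2) * (Real.sinh (x/2) * (1/2))) / (Real.cosh (x/2))^2) x :=
    (sinh_half_hasDerivAt x).div (cosh_half_hasDerivAt x) (cosh_ne x)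
  have h2 := h.const_mul (1/2 : ℝ)
  refine h2.congr_deriv ?_.symm
  have hs : Real.cosh (x/2)^2 - Real.sinh (x/2)^2 = 1 := Real.cosh_sq_sub_sinh_sq (x/2)
  have hc := cosh_ne x
  simp only [eta]
  field_simp
  nlinarith [hs]

lemma tanh_repr_top (y : ℝ) :
    (1/2) * (Real.sinh (y/2) / Real.cosh (y/2)) =
      (1/2) * ((1 - Real.exp (-y)) / (1 + Real.exp (-y))) := by
  have ht : (0:ℝ) < Real.exp (y/2) := Real.exp_pos _
  have he : Real.exp (-y) = (Real.exp (y/2))⁻¹ * (Real.exp (y/2))⁻¹ := by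
    rw [← Real.exp_neg, ← Real.exp_add]; ring_nf
  have hden : (0:ℝ) < 1 + Real.exp (-y) := by positivity
  rw [Real.sinh_eq, Real.cosh_eq, Real.exp_neg, he]
  field_simp

lemma tanh_repr_bot (y : ℝ) :
    (1/2) * (Real.sinh (y/2) / Real.cosh (y/2)) =
      (1/2) * ((Real.exp y - 1) / (Real.exp y + 1)) := by
  have ht : (0:ℝ) < Real.exp (y/2) := Real.exp_pos _
  have he : Real.exp y = Real.exp (y/2) * Real.exp (y/2) := by
    rw [← Real.exp_add]; ring_nf
  have hden : (0:ℝ) < Real.exp y + 1 := by positivity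
  rw [Real.sinh_eq, Real.cosh_eq, Real.exp_neg, he]
  have h1 : (0:ℝ) < Real.exp (y/2) * Real.exp (y/2) + 1 := by positivity
  field_simp

lemma tanh_tendsto_top :
    Filter.Tendsto (fun y : ℝ => (1/2) * (Real.sinh (y/2) / Real.cosh (y/2)))
      Filter.atTop (nhds (1/2)) := by
  simp only [tanh_repr_top]
  have h : Filter.Tendsto (fun y : ℝ => Real.exp (-y)) Filter.atTop (nhds 0) :=
    Real.tendsto_exp_neg_atTop_nhds_zero
  have := (((tendsto_const_nhds (x := (1:ℝ))).sub h).div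
    ((tendsto_const_nhds (x := (1:ℝ))).add h) (by norm_num)).const_mul (1/2 : ℝ)
  simpa using this

lemma tanh_tendsto_bot :
    Filter.Tendsto (fun y : ℝ => (1/2) * (Real.sinh (y/2) / Real.cosh (y/2)))
      Filter.atBot (nhds (-(1/2))) := by
  simp only [tanh_repr_bot]
  have h : Filter.Tendsto Real.exp Filter.atBot (nhds 0) := Real.tendsto_exp_atBot
  have := ((h.sub (tendsto_const_nhds (x := (1:ℝ)))).div
    (h.add (tendsto_const_nhds (x := (1:ℝ)))) (by norm_num)).const_mul (1/2 : ℝ)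
  norm_num at this
  convert this using 2

lemma eta_sq_integrableOn_Ioi : IntegrableOn (fun y : ℝ => eta y ^ 2) (Set.Ioi 0) := by
  exact integrableOn_Ioi_deriv_of_nonneg' (fun x _ => tanh_half_hasDerivAt x)
    (fun x _ => sq_nonneg _) tanh_tendsto_top

lemma eta_sq_integrable : Integrable (fun y : ℝ => eta y ^ 2) := by
  rw [← integrableOn_univ, ← Set.Iio_union_Ici (a := (0:ℝ)), integrableOn_union,
    integrableOn_Ici_iff_integrableOn_Ioi]
  refine ⟨?_, eta_sq_integrableOn_Ioi⟩
  rw [← (Measure.measurePreserving_neg (volume : Measure ℝ)).integrableOn_comp_preimage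
      (Homeomorph.neg ℝ).measurableEmbedding]
  have hset : (Neg.neg ⁻¹' Set.Iio (0:ℝ)) = Set.Ioi 0 := by ext z; simp
  simp only [Function.comp_def, hset]
  have : (fun x : ℝ => eta (-x) ^ 2) = fun x : ℝ => eta x ^ 2 := by
    funext x; simp [eta, neg_div, Real.cosh_neg]
  rw [this]
  exact eta_sq_integrableOn_Ioi

lemma eta_sq_integral : ∫ y : ℝ, eta y ^ 2 = 1 := by
  have := integral_of_hasDerivAt_of_tendsto (f := fun y : ℝ => (1/2) * (Real.sinh (y/2) / Real.cosh (y/2)))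
    (f' := fun y : ℝ => eta y ^ 2) (fun x => tanh_half_hasDerivAt x) eta_sq_integrable
    tanh_tendsto_bot tanh_tendsto_top
  rw [this]; norm_num

/-- exact preservation of the ground state by the linearly implicit scheme:
for `0 < τ < 8`, the function `ψ* = (1 − τ/8)⁻¹ η` solves the linearly implicit step with
data `η`, and its `L²` normalization is `η` again. -/
theorem implicit_scheme_preserves_ground_state (τ : ℝ) (hτ0 : 0 < τ) (hτ : τ < 8) :
    (∀ x : ℝ, (1 - τ/8)⁻¹ * eta x =
      eta x + τ * ((1/2) * deriv (deriv (fun y => (1 - τ/8)⁻¹ * eta y)) x +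
        (eta x)^2 * ((1 - τ/8)⁻¹ * eta x))) ∧
    (fun x => (1 - τ/8)⁻¹ * eta x /
        Real.sqrt (∫ y : ℝ, ((1 - τ/8)⁻¹ * eta y)^2)) = eta := by
  have hpos : 0 < 1 - τ/8 := by linarith
  have hne : (1 - τ/8) ≠ 0 := hpos.ne'
  have hA : (0:ℝ) < (1 - τ/8)⁻¹ := inv_pos.mpr hpos
  set A : ℝ := (1 - τ/8)⁻¹ with hAdef
  have hd1 : deriv (fun y => A * eta y) = fun y => A * etaD y := by
    funext y; exact ((eta_hasDerivAt y).const_mul A).deriv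
  constructor
  · intro x
    rw [hd1]
    have hd2 : deriv (fun y => A * etaD y) x = A * etaDD x :=
      ((etaD_hasDerivAt x).const_mul A).deriv
    rw [hd2]
    have hAinv : (1 - τ/8)⁻¹ * (1 - τ/8) = 1 := inv_mul_cancel₀ hne
    simp only [eta, etaDD, hAdef]
    linear_combination ((1 / Real.cosh (x/2)) / 2) * hAinv
  · have hint : ∫ y : ℝ, (A * eta y)^2 = A^2 := by
      simp_rw [mul_pow]
      rw [integral_const_mul, eta_sq_integral, mul_one]
    rw [hint, Real.sqrt_sq hA.le]
    funext x
    rw [mul_comm, mul_div_assoc, div_self hA.ne', mul_one]
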